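/- Let A be a strong M-tensor of order m and dimension n (m ≥ 2) and let b ∈ ℝ^n with b ≥ 0. Then the problem (P1) of minimizing e^T x subject to x ≥ 0 and A x^{m-1} − b = 0 has a unique optimal solution, and this unique solution is also an optimal solution of the problem (P0) of minimizing ‖x‖₀ subject to x ≥ 0, A x^{m-1} − b ≥ 0, ⟨x, A x^{m-1} − b⟩ = 0. -/

import Mathlib

/-- `(A x^{m-1})_i = ∑_{i₂,…,i_m} a_{i i₂ … i_m} x_{i₂} ⋯ x_{i_m}` (real vectors). -/
def tApply {n k : ℕ} (A : Fin n → (Fin k → Fin n) → ℝ) (x : Fin n → ℝ) : Fin n → ℝ :=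
  fun i => ∑ j : Fin k → Fin n, A i j * ∏ t, x (j t)

/-- `λ ∈ ℂ` is an eigenvalue of the order-`k+1` tensor `B` if `(B x^k)_i = λ x_i^k`
for all `i`, for some nonzero complex vector `x`. -/
def IsEigenvalue {n k : ℕ} (B : Fin n → (Fin k → Fin n) → ℝ) (lam : ℂ) : Prop :=
  ∃ x : Fin n → ℂ, x ≠ 0 ∧
    ∀ i, (∑ j : Fin k → Fin n, (B i j : ℂ) * ∏ t, x (j t)) = lam * x i ^ k

/-- `A` is a strong M-tensor: `A = s I - B` with `B ≥ 0`, `s > 0`, and `|λ| < s` for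
every eigenvalue `λ` of `B`; here `I` is the identity tensor. -/
def IsStrongMTensor {n k : ℕ} (A : Fin n → (Fin k → Fin n) → ℝ) : Prop :=
  ∃ (s : ℝ) (B : Fin n → (Fin k → Fin n) → ℝ),
    0 < s ∧ (∀ i j, 0 ≤ B i j) ∧
    (∀ lam : ℂ, IsEigenvalue B lam → ‖lam‖ < s) ∧
    (∀ i j, A i j = s * (if ∀ t, j t = i then (1 : ℝ) else 0) - B i j)

/-- `‖x‖₀`, the number of nonzero components of `x`. -/
noncomputable def l0 {n : ℕ} (x : Fin n → ℝ) : ℕ :=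
  (Finset.univ.filter (fun i => x i ≠ 0)).card

section aux
variable {n k : ℕ}

lemma tApply_nonneg {B : Fin n → (Fin k → Fin n) → ℝ} (hB : ∀ i j, 0 ≤ B i j)
    {x : Fin n → ℝ} (hx : ∀ i, 0 ≤ x i) (i : Fin n) : 0 ≤ tApply B x i :=
  Finset.sum_nonneg fun j _ => mul_nonneg (hB i j) (Finset.prod_nonneg fun t _ => hx _)

lemma tApply_mono {B : Fin n → (Fin k → Fin n) → ℝ} (hB : ∀ i j, 0 ≤ B i j)
    {x y : Fin n → ℝ} (hx : ∀ i, 0 ≤ x i) (hxy : ∀ i, x i ≤ y i) (i : Fin n) :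
    tApply B x i ≤ tApply B y i :=
  Finset.sum_le_sum fun j _ => mul_le_mul_of_nonneg_left
    (Finset.prod_le_prod (fun t _ => hx _) (fun t _ => hxy _)) (hB i j)

lemma tApply_smul (B : Fin n → (Fin k → Fin n) → ℝ) (c : ℝ) (x : Fin n → ℝ) (i : Fin n) :
    tApply B (fun i => c * x i) i = c ^ k * tApply B x i := by
  unfold tApply
  rw [Finset.mul_sum]
  refine Finset.sum_congr rfl fun j _ => ?_
  rw [Finset.prod_mul_distrib, Finset.prod_const]
  simp [Finset.card_univ]
  ring

lemma tApply_continuous (B : Fin n → (Fin k → Fin n) → ℝ) (i : Fin n) :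
    Continuous fun x : Fin n → ℝ => tApply B x i := by
  unfold tApply
  exact continuous_finset_sum _ fun j _ =>
    continuous_const.mul (continuous_finset_prod _ fun t _ => continuous_apply _)

lemma tApply_sub {s : ℝ} {A B : Fin n → (Fin k → Fin n) → ℝ}
    (hAB : ∀ i j, A i j = s * (if ∀ t, j t = i then (1:ℝ) else 0) - B i j)
    (x : Fin n → ℝ) (i : Fin n) : tApply A x i = s * x i ^ k - tApply B x i := by
  classical
  unfold tApply
  simp only [hAB, sub_mul, Finset.sum_sub_distrib]
  congr 1
  have h1 : ∀ j : Fin k → Fin n,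
      s * (if ∀ t, j t = i then (1:ℝ) else 0) * ∏ t, x (j t)
      = if j = (fun _ => i) then s * ∏ t, x (j t) else 0 := by
    intro j
    by_cases h : j = fun _ => i
    · simp [h]
    · have h2 : ¬ ∀ t, j t = i := fun ht => h (funext ht)
      simp [h, h2]
  rw [Finset.sum_congr rfl fun j _ => h1 j,
    Finset.sum_ite_eq' Finset.univ (fun _ => i) (fun j => s * ∏ t, x (j t))]
  simp [Finset.prod_const, Finset.card_univ]

end aux

set_option maxHeartbeats 1000000 in
lemma lemA {n k : ℕ} (hn : 0 < n) (hk : 1 ≤ k)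
    (B : Fin n → (Fin k → Fin n) → ℝ) (hB : ∀ i j, 0 ≤ B i j) :
    ∃ C₀ : ℝ, 0 < C₀ ∧ ∀ ε : ℝ, 0 < ε → ε ≤ 1 →
      ∃ (x : Fin n → ℝ) (lam : ℝ), (∀ i, 0 ≤ x i) ∧ (∑ i, x i) = 1 ∧
        0 < lam ∧ lam ≤ C₀ ∧ ∀ i, tApply B x i + ε = lam * x i ^ k := by
  classical
  have hk0 : k ≠ 0 := by omega
  have hn' : (0:ℝ) < n := by exact_mod_cast hn
  set S : ℝ := ∑ i, tApply B (fun _ => (1:ℝ)) i with hS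
  have hT : ∀ i, 0 ≤ tApply B (fun _ => (1:ℝ)) i :=
    tApply_nonneg hB (fun _ => zero_le_one)
  have hS0 : 0 ≤ S := Finset.sum_nonneg fun i _ => hT i
  set C₀ : ℝ := (n:ℝ)^k * (S + 1) with hC₀
  have hC₀pos : 0 < C₀ := by positivity
  refine ⟨C₀, hC₀pos, ?_⟩
  intro ε hε hε1
  set K : Set ((Fin n → ℝ) × ℝ) := {p | (∀ i, 0 ≤ p.1 i) ∧ (∑ i, p.1 i) = 1 ∧
      0 ≤ p.2 ∧ p.2 ≤ C₀ ∧ ∀ i, tApply B p.1 i + ε ≤ p.2 * p.1 i ^ k} with hK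
  -- K is compact
  have hKsub : K ⊆ Set.Icc ((fun _ => (0:ℝ)), (0:ℝ)) ((fun _ => (1:ℝ)), C₀) := by
    rintro ⟨x, t⟩ ⟨h1, h2, h3, h4, _⟩
    constructor
    · exact ⟨fun i => h1 i, h3⟩
    · refine ⟨fun i => ?_, h4⟩
      calc x i ≤ ∑ i', x i' := Finset.single_le_sum (fun i' _ => h1 i') (Finset.mem_univ i)
        _ = 1 := h2
  have hKclosed : IsClosed K := by
    have e1 : IsClosed {p : (Fin n → ℝ) × ℝ | ∀ i, 0 ≤ p.1 i} := by
      rw [Set.setOf_forall]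
      exact isClosed_iInter fun i =>
        isClosed_le continuous_const ((continuous_apply i).comp continuous_fst)
    have e2 : IsClosed {p : (Fin n → ℝ) × ℝ | (∑ i, p.1 i) = 1} :=
      isClosed_eq (by exact continuous_finset_sum _ fun i _ =>
        (continuous_apply i).comp continuous_fst) continuous_const
    have e3 : IsClosed {p : (Fin n → ℝ) × ℝ | 0 ≤ p.2} :=
      isClosed_le continuous_const continuous_snd
    have e4 : IsClosed {p : (Fin n → ℝ) × ℝ | p.2 ≤ C₀} :=
      isClosed_le continuous_snd continuous_const
    have e5 : IsClosed {p : (Fin n → ℝ) × ℝ | ∀ i, tApply B p.1 i + ε ≤ p.2 * p.1 i ^ k} := by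
      rw [Set.setOf_forall]
      refine isClosed_iInter fun i => isClosed_le ?_ ?_
      · exact ((tApply_continuous B i).comp continuous_fst).add continuous_const
      · exact continuous_snd.mul (((continuous_apply i).comp continuous_fst).pow k)
    have : K = {p : (Fin n → ℝ) × ℝ | ∀ i, 0 ≤ p.1 i} ∩
        ({p | (∑ i, p.1 i) = 1} ∩ ({p | 0 ≤ p.2} ∩ ({p | p.2 ≤ C₀} ∩
         {p | ∀ i, tApply B p.1 i + ε ≤ p.2 * p.1 i ^ k}))) := by
      ext p
      simp only [hK, Set.mem_setOf_eq, Set.mem_inter_iff, and_assoc]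
    rw [this]
    exact e1.inter (e2.inter (e3.inter (e4.inter e5)))
  have hKcomp : IsCompact K := IsCompact.of_isClosed_subset isCompact_Icc hKclosed hKsub
  -- K is nonempty
  have hwmem : ((fun _ => 1/(n:ℝ)), C₀) ∈ K := by
    refine ⟨fun i => by positivity, ?_, le_of_lt hC₀pos, le_refl _, fun i => ?_⟩
    · rw [Finset.sum_const, Finset.card_univ, Fintype.card_fin, nsmul_eq_mul]
      field_simp
    · have h1 : tApply B (fun _ => 1/(n:ℝ)) i = (1/(n:ℝ))^k * tApply B (fun _ => (1:ℝ)) i := by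
        have := tApply_smul B (1/(n:ℝ)) (fun _ => (1:ℝ)) i
        simpa using this
      have h2 : C₀ * (1/(n:ℝ))^k = S + 1 := by
        rw [hC₀]; field_simp; rw [← mul_pow, mul_one_div_cancel (ne_of_gt hn'), one_pow]
      rw [h1, h2]
      have h3 : (1/(n:ℝ))^k ≤ 1 := by
        apply pow_le_one₀ (by positivity)
        rw [div_le_one hn']; exact_mod_cast hn
      have h4 : tApply B (fun _ => (1:ℝ)) i ≤ S :=
        Finset.single_le_sum (fun i' _ => hT i') (Finset.mem_univ i)
      nlinarith [hT i]
  -- the minimizer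
  obtain ⟨p, hpK, hpmin⟩ := hKcomp.exists_isMinOn ⟨_, hwmem⟩
    (continuous_snd.continuousOn : ContinuousOn (fun p : (Fin n → ℝ) × ℝ => p.2) K)
  obtain ⟨hx0, hxsum, hlam0, hlamC, hcons⟩ := hpK
  set x : Fin n → ℝ := p.1 with hxdef
  set lam : ℝ := p.2 with hlamdef
  have hmin : ∀ q ∈ K, lam ≤ q.2 := fun q hq => isMinOn_iff.mp hpmin q hq
  -- positivity of lam and x
  have hBx0 : ∀ i, 0 ≤ tApply B x i := tApply_nonneg hB hx0
  have hlampos : 0 < lam := by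
    rcases lt_or_ge 0 lam with h | h
    · exact h
    · exfalso
      have i₀ : Fin n := ⟨0, hn⟩
      have := hcons i₀
      nlinarith [hBx0 i₀, pow_nonneg (hx0 i₀) k]
  have hxpos : ∀ i, 0 < x i := by
    intro i
    have h1 : ε ≤ lam * x i ^ k := by nlinarith [hcons i, hBx0 i]
    have h2 : 0 < x i ^ k := by nlinarith
    rcases (hx0 i).lt_or_eq with h | h
    · exact h
    · exfalso; rw [← h, zero_pow hk0] at h2; exact lt_irrefl 0 h2
  refine ⟨x, lam, hx0, hxsum, hlampos, hlamC, ?_⟩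
  -- equality via perturbation
  by_contra hne
  push_neg at hne
  obtain ⟨i₁, hi₁⟩ := hne
  set T : Finset (Fin n) := Finset.univ.filter
    (fun i => tApply B x i + ε < lam * x i ^ k) with hTdef
  have hi₁T : i₁ ∈ T := by
    rw [hTdef, Finset.mem_filter]
    exact ⟨Finset.mem_univ _, lt_of_le_of_ne (hcons i₁) hi₁⟩
  -- choose δ
  have hev : ∀ᶠ δ in nhdsWithin (0:ℝ) (Set.Ioi 0),
      ∀ i, i ∈ T → (δ < x i ∧ tApply B x i + ε < lam * (x i - δ)^k) := by
    apply Filter.Eventually.filter_mono nhdsWithin_le_nhds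
    rw [Filter.eventually_all]
    intro i
    by_cases hiT : i ∈ T
    · have c1 : ∀ᶠ δ in nhds (0:ℝ), δ < x i :=
        Filter.eventually_of_mem (Iio_mem_nhds (hxpos i)) (fun δ hδ => hδ)
      have c2 : ∀ᶠ δ in nhds (0:ℝ), tApply B x i + ε < lam * (x i - δ)^k := by
        have hopen : IsOpen {δ : ℝ | tApply B x i + ε < lam * (x i - δ)^k} :=
          isOpen_lt continuous_const
            (continuous_const.mul ((continuous_const.sub continuous_id).pow k))
        have h0 : (0:ℝ) ∈ {δ : ℝ | tApply B x i + ε < lam * (x i - δ)^k} := by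
          have := (Finset.mem_filter.mp hiT).2
          simpa using this
        exact Filter.eventually_of_mem (hopen.mem_nhds h0) (fun δ hδ => hδ)
      filter_upwards [c1, c2] with δ h1 h2
      exact fun _ => ⟨h1, h2⟩
    · exact Filter.Eventually.of_forall (fun δ h => absurd h hiT)
  obtain ⟨δ, hδT, hδpos⟩ := (hev.and self_mem_nhdsWithin).exists
  replace hδpos : 0 < δ := hδpos
  set x' : Fin n → ℝ := fun i => if i ∈ T then x i - δ else x i with hx'def
  have hx'le : ∀ i, x' i ≤ x i := by
    intro i; rw [hx'def]; dsimp only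
    split
    · linarith
    · exact le_refl _
  have hx'pos : ∀ i, 0 < x' i := by
    intro i; rw [hx'def]; dsimp only
    split
    · rename_i h; linarith [(hδT i h).1]
    · exact hxpos i
  have hx'0 : ∀ i, 0 ≤ x' i := fun i => (hx'pos i).le
  set σ : ℝ := ∑ i, x' i with hσdef
  have hσpos : 0 < σ :=
    Finset.sum_pos (fun i _ => hx'pos i) ⟨⟨0, hn⟩, Finset.mem_univ _⟩
  have hσlt : σ < 1 := by
    have : σ < ∑ i, x i := by
      refine Finset.sum_lt_sum (fun i _ => hx'le i) ⟨i₁, Finset.mem_univ _, ?_⟩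
      rw [hx'def]; dsimp only; rw [if_pos hi₁T]; linarith
    linarith [hxsum ▸ this]
  -- key strict inequality for x'
  have hkey : ∀ i, tApply B x' i + ε * σ^k < lam * x' i ^ k := by
    intro i
    have hBle : tApply B x' i ≤ tApply B x i := tApply_mono hB hx'0 hx'le i
    have hσk1 : σ^k < 1 := pow_lt_one₀ hσpos.le hσlt hk0
    by_cases hiT : i ∈ T
    · have h2 := (hδT i hiT).2
      have hx'eq : x' i = x i - δ := by rw [hx'def]; dsimp only; rw [if_pos hiT]
      rw [hx'eq]
      nlinarith
    · have heq : tApply B x i + ε = lam * x i ^ k :=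
        le_antisymm (hcons i) (by
          by_contra h
          exact hiT (Finset.mem_filter.mpr ⟨Finset.mem_univ _, lt_of_not_ge h⟩))
      have hx'eq : x' i = x i := by rw [hx'def]; dsimp only; rw [if_neg hiT]
      rw [hx'eq]
      nlinarith
  -- normalize
  set y : Fin n → ℝ := fun i => σ⁻¹ * x' i with hydef
  have hy0 : ∀ i, 0 ≤ y i := fun i => mul_nonneg (by positivity) (hx'0 i)
  have hypos : ∀ i, 0 < y i := fun i => mul_pos (by positivity) (hx'pos i)
  have hysum : (∑ i, y i) = 1 := by
    rw [hydef]; dsimp only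
    rw [← Finset.mul_sum, ← hσdef, inv_mul_cancel₀ (ne_of_gt hσpos)]
  have hykey : ∀ i, tApply B y i + ε < lam * y i ^ k := by
    intro i
    have h1 : tApply B y i = σ⁻¹^k * tApply B x' i := tApply_smul B σ⁻¹ x' i
    have h2 : y i ^ k = σ⁻¹^k * x' i ^ k := by
      rw [hydef]; dsimp only; rw [mul_pow]
    have h3 : σ⁻¹^k * σ^k = 1 := by
      rw [← mul_pow, inv_mul_cancel₀ (ne_of_gt hσpos), one_pow]
    have h4 : (0:ℝ) < σ⁻¹^k := by positivity
    have := hkey i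
    rw [h1, h2]
    calc σ⁻¹^k * tApply B x' i + ε
        = σ⁻¹^k * (tApply B x' i + ε * σ^k) := by rw [mul_add, ← mul_assoc,
            mul_comm (σ⁻¹^k) ε, mul_assoc, h3, mul_one]
      _ < σ⁻¹^k * (lam * x' i ^ k) := by exact (mul_lt_mul_iff_right₀ h4).mpr this
      _ = lam * (σ⁻¹^k * x' i ^ k) := by ring
  -- build a better feasible point
  have huniv : (Finset.univ : Finset (Fin n)).Nonempty := ⟨⟨0, hn⟩, Finset.mem_univ _⟩
  set g : Fin n → ℝ := fun i => (tApply B y i + ε) / (y i ^ k) with hgdef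
  set t' : ℝ := Finset.univ.sup' huniv g with ht'def
  have hykpos : ∀ i, 0 < y i ^ k := fun i => pow_pos (hypos i) k
  have ht'lt : t' < lam := by
    rw [ht'def, Finset.sup'_lt_iff]
    intro i _
    rw [hgdef]
    dsimp only
    rw [div_lt_iff₀ (hykpos i)]
    linarith [hykey i, (mul_comm lam (y i ^ k)) ▸ hykey i]
  have ht'0 : 0 ≤ t' := by
    have h1 : 0 ≤ g ⟨0, hn⟩ := by
      rw [hgdef]
      exact div_nonneg (by linarith [tApply_nonneg hB hy0 ⟨0, hn⟩]) (hykpos ⟨0, hn⟩).le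
    exact le_trans h1 (Finset.le_sup' g (Finset.mem_univ ⟨0, hn⟩))
  have hycons : ∀ i, tApply B y i + ε ≤ t' * y i ^ k := by
    intro i
    have h1 : g i ≤ t' := Finset.le_sup' g (Finset.mem_univ i)
    rw [hgdef] at h1
    dsimp only at h1
    rw [div_le_iff₀ (hykpos i)] at h1
    linarith [h1]
  have hyK : ((y, t') : (Fin n → ℝ) × ℝ) ∈ K :=
    ⟨hy0, hysum, ht'0, le_trans ht'lt.le hlamC, hycons⟩
  exact absurd (hmin _ hyK) (not_le.mpr ht'lt)

lemma exists_semipos {n k : ℕ} (hn : 0 < n) (hk : 1 ≤ k) {s : ℝ} (hs : 0 < s)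
    (B : Fin n → (Fin k → Fin n) → ℝ) (hB : ∀ i j, 0 ≤ B i j)
    (heig : ∀ lam : ℂ, IsEigenvalue B lam → ‖lam‖ < s) :
    ∃ (v : Fin n → ℝ) (ε : ℝ), 0 < ε ∧ (∀ i, 0 ≤ v i) ∧
      ∀ i, tApply B v i + ε ≤ s * v i ^ k := by
  classical
  obtain ⟨C₀, hC₀, hA⟩ := lemA hn hk B hB
  have hεj : ∀ j : ℕ, (0:ℝ) < 1/(j+1) ∧ (1:ℝ)/(j+1) ≤ 1 := by
    intro j
    constructor
    · positivity
    · rw [div_le_one (by positivity)]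
      have : (0:ℝ) ≤ j := Nat.cast_nonneg j
      linarith
  choose x lam hx0 hxsum hlam0 hlamC heq using fun j : ℕ => hA (1/(j+1)) (hεj j).1 (hεj j).2
  by_cases hex : ∃ j : ℕ, lam j ≤ s
  · obtain ⟨j, hj⟩ := hex
    refine ⟨x j, 1/(j+1), (hεj j).1, hx0 j, fun i => ?_⟩
    have h1 := heq j i
    have h2 : lam j * x j i ^ k ≤ s * x j i ^ k :=
      mul_le_mul_of_nonneg_right hj (pow_nonneg (hx0 j i) k)
    linarith
  · exfalso
    push_neg at hex
    -- compact set containing the sequence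
    set C : Set ((Fin n → ℝ) × ℝ) :=
      Set.Icc ((fun _ => (0:ℝ)), s) ((fun _ => (1:ℝ)), C₀) ∩ {p | (∑ i, p.1 i) = 1} with hC
    have hCcomp : IsCompact C := isCompact_Icc.inter_right
      (isClosed_eq (continuous_finset_sum _ fun i _ =>
        (continuous_apply i).comp continuous_fst) continuous_const)
    have hmem : ∀ j : ℕ, ((x j, lam j) : (Fin n → ℝ) × ℝ) ∈ C := by
      intro j
      refine ⟨⟨⟨fun i => hx0 j i, (hex j).le⟩, ⟨fun i => ?_, hlamC j⟩⟩, hxsum j⟩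
      calc x j i ≤ ∑ i', x j i' :=
            Finset.single_le_sum (fun i' _ => hx0 j i') (Finset.mem_univ i)
        _ = 1 := hxsum j
    obtain ⟨⟨xh, lamh⟩, hlimmem, φ, hφ, hlim⟩ :=
      hCcomp.tendsto_subseq hmem
    obtain ⟨⟨⟨hxh0, hsh⟩, _⟩, hxhsum⟩ := hlimmem
    -- limits of components
    have hlimx : Filter.Tendsto (fun j => x (φ j)) Filter.atTop (nhds xh) :=
      (continuous_fst.tendsto _).comp hlim
    have hlimlam : Filter.Tendsto (fun j => lam (φ j)) Filter.atTop (nhds lamh) :=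
      (continuous_snd.tendsto _).comp hlim
    have hεlim : Filter.Tendsto (fun j : ℕ => (1:ℝ)/((φ j : ℝ)+1)) Filter.atTop (nhds 0) := by
      have h1 : Filter.Tendsto (fun j : ℕ => (1:ℝ)/((j:ℝ)+1)) Filter.atTop (nhds 0) :=
        tendsto_one_div_add_atTop_nhds_zero_nat
      exact h1.comp (hφ.tendsto_atTop)
    -- the limit equation
    have heqlim : ∀ i, tApply B xh i = lamh * xh i ^ k := by
      intro i
      have hlhs : Filter.Tendsto (fun j => tApply B (x (φ j)) i + 1/((φ j : ℝ)+1))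
          Filter.atTop (nhds (tApply B xh i + 0)) :=
        (((tApply_continuous B i).tendsto _).comp hlimx).add hεlim
      have hrhs : Filter.Tendsto (fun j => lam (φ j) * (x (φ j) i) ^ k)
          Filter.atTop (nhds (lamh * xh i ^ k)) := by
        refine hlimlam.mul ?_
        exact (((continuous_apply i).tendsto _).comp hlimx).pow k
      have hsame : (fun j => tApply B (x (φ j)) i + 1/((φ j : ℝ)+1)) =
          (fun j => lam (φ j) * (x (φ j) i) ^ k) := by
        funext j
        have := heq (φ j) i
        push_cast at this ⊢
        linarith
      rw [hsame] at hlhs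
      have := tendsto_nhds_unique hlhs hrhs
      linarith
    -- xh ≠ 0
    have hxhne : ∃ i, xh i ≠ 0 := by
      by_contra h
      push_neg at h
      have h0 : (∑ i, xh i) = 0 := Finset.sum_eq_zero fun i _ => h i
      rw [hxhsum] at h0
      norm_num at h0
    -- build the eigenvalue
    have : IsEigenvalue B (lamh : ℂ) := by
      refine ⟨fun i => (xh i : ℂ), ?_, ?_⟩
      · intro h
        obtain ⟨i, hi⟩ := hxhne
        have := congrFun h i
        simp at this
        exact hi this
      · intro i
        have h1 : (∑ j : Fin k → Fin n, (B i j : ℂ) * ∏ t, ((xh (j t) : ℝ) : ℂ))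
            = ((tApply B xh i : ℝ) : ℂ) := by
          unfold tApply
          push_cast
          rfl
        rw [h1, heqlim i]
        push_cast
        ring
    have hlt := heig _ this
    rw [Complex.norm_real, Real.norm_eq_abs, abs_of_nonneg (le_trans hs.le hsh)] at hlt
    linarith

/-- rpow root facts -/
lemma rpow_inv_le_iff {k : ℕ} (hk : k ≠ 0) {a z : ℝ} (ha : 0 ≤ a) (hz : 0 ≤ z) :
    a ^ ((k:ℝ)⁻¹) ≤ z ↔ a ≤ z ^ k := by
  have hk' : (0:ℝ) < k := by positivity
  constructor
  · intro h
    have h1 : (a ^ ((k:ℝ)⁻¹)) ^ k ≤ z ^ k :=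
      pow_le_pow_left₀ (Real.rpow_nonneg ha _) h k
    rwa [← Real.rpow_natCast (a ^ ((k:ℝ)⁻¹)) k, ← Real.rpow_mul ha,
      inv_mul_cancel₀ (ne_of_gt hk'), Real.rpow_one] at h1
  · intro h
    have h1 : a ^ ((k:ℝ)⁻¹) ≤ (z ^ k) ^ ((k:ℝ)⁻¹) :=
      Real.rpow_le_rpow ha h (by positivity)
    rwa [← Real.rpow_natCast z k, ← Real.rpow_mul hz,
      mul_inv_cancel₀ (ne_of_gt hk'), Real.rpow_one] at h1


/-- For a strong M-tensor `A` and `b ≥ 0`, `(P₁)` has a unique optimal solution,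
which is also an optimal solution of `(P₀)`. -/
theorem stmt12 {n m : ℕ} (hm : 2 ≤ m) (A : Fin n → (Fin (m - 1) → Fin n) → ℝ)
    (hA : IsStrongMTensor A) (b : Fin n → ℝ) (hb : ∀ i, 0 ≤ b i) :
    ∃ xs : Fin n → ℝ,
      -- xs is the unique optimal solution of (P₁)
      ((∀ i, 0 ≤ xs i) ∧ ∀ i, tApply A xs i - b i = 0) ∧
      (∀ y : Fin n → ℝ, ((∀ i, 0 ≤ y i) ∧ ∀ i, tApply A y i - b i = 0) →
        (∑ i, xs i ≤ ∑ i, y i) ∧ (∑ i, y i = ∑ i, xs i → y = xs)) ∧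
      -- xs is an optimal solution of (P₀)
      ((∀ i, 0 ≤ xs i) ∧ (∀ i, b i ≤ tApply A xs i) ∧
        ∑ i, xs i * (tApply A xs i - b i) = 0) ∧
      (∀ x : Fin n → ℝ, ((∀ i, 0 ≤ x i) ∧ (∀ i, b i ≤ tApply A x i) ∧
        ∑ i, x i * (tApply A x i - b i) = 0) → l0 xs ≤ l0 x) := by
  classical
  rcases Nat.eq_zero_or_pos n with hn | hn
  · subst hn
    refine ⟨0, ⟨fun i => i.elim0, fun i => i.elim0⟩,
      fun y _ => ⟨le_of_eq (by simp), fun _ => funext fun i => i.elim0⟩,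
      ⟨fun i => i.elim0, fun i => i.elim0, by simp⟩,
      fun x _ => ?_⟩
    have : l0 (0 : Fin 0 → ℝ) = 0 := by simp [l0]
    omega
  have hk : 1 ≤ m - 1 := by omega
  have hk0 : (m - 1) ≠ 0 := by omega
  obtain ⟨s, B, hs, hB, heig, hAB⟩ := hA
  obtain ⟨v, ε, hε, hv0, hvs⟩ := exists_semipos hn hk hs B hB heig
  -- the upper solution u
  set t : ℝ := 1 + (∑ i, b i) / ε with htdef
  have hbsum : 0 ≤ ∑ i, b i := Finset.sum_nonneg fun i _ => hb i
  have ht1 : 1 ≤ t := by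
    have : 0 ≤ (∑ i, b i) / ε := div_nonneg hbsum hε.le
    rw [htdef]; linarith
  have htk : t ≤ t ^ (m - 1) := le_self_pow₀ (by linarith) hk0
  have htkpos : (0:ℝ) < t ^ (m - 1) := by positivity
  set u : Fin n → ℝ := fun i => t * v i with hudef
  have hu0 : ∀ i, 0 ≤ u i := fun i => mul_nonneg (by linarith) (hv0 i)
  have htε : t * ε = ε + ∑ i, b i := by
    rw [htdef]; field_simp
  have hbtk : ∀ i, b i ≤ t ^ (m - 1) * ε := by
    intro i
    have h1 : b i ≤ ∑ i', b i' := Finset.single_le_sum (fun i' _ => hb i') (Finset.mem_univ i)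
    have h2 : t * ε ≤ t ^ (m - 1) * ε := mul_le_mul_of_nonneg_right htk hε.le
    linarith
  have huB : ∀ i, tApply B u i + b i ≤ s * u i ^ (m - 1) := by
    intro i
    have h1 : tApply B u i = t ^ (m - 1) * tApply B v i := tApply_smul B t v i
    have h2 : s * u i ^ (m - 1) = t ^ (m - 1) * (s * v i ^ (m - 1)) := by
      rw [hudef]; dsimp only; rw [mul_pow]; ring
    have h3 : t ^ (m - 1) * (tApply B v i + ε) ≤ t ^ (m - 1) * (s * v i ^ (m - 1)) :=
      mul_le_mul_of_nonneg_left (hvs i) htkpos.le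
    have h4 := hbtk i
    rw [h1, h2]; nlinarith
  -- the monotone root map
  set f : (Fin n → ℝ) → Fin n → ℝ :=
    fun x i => ((tApply B x i + b i) / s) ^ (((m - 1 : ℕ)):ℝ)⁻¹ with hfdef
  have hinner : ∀ x : Fin n → ℝ, (∀ i, 0 ≤ x i) → ∀ i, 0 ≤ (tApply B x i + b i) / s :=
    fun x hx i => div_nonneg (add_nonneg (tApply_nonneg hB hx i) (hb i)) hs.le
  have hf0 : ∀ x : Fin n → ℝ, (∀ i, 0 ≤ x i) → ∀ i, 0 ≤ f x i :=
    fun x hx i => Real.rpow_nonneg (hinner x hx i) _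
  have hfle : ∀ (x : Fin n → ℝ), (∀ i, 0 ≤ x i) → ∀ (i : Fin n) (z : ℝ), 0 ≤ z →
      (f x i ≤ z ↔ tApply B x i + b i ≤ s * z ^ (m - 1)) := by
    intro x hx i z hz
    rw [hfdef]
    dsimp only
    rw [rpow_inv_le_iff hk0 (hinner x hx i) hz, div_le_iff₀ hs, mul_comm]
  have hfmono : ∀ x y : Fin n → ℝ, (∀ i, 0 ≤ x i) → (∀ i, x i ≤ y i) →
      ∀ i, f x i ≤ f y i := by
    intro x y hx hxy i
    rw [hfdef]
    dsimp only
    refine Real.rpow_le_rpow (hinner x hx i) ?_ (by positivity)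
    have h := tApply_mono hB hx hxy i
    gcongr
  -- least fixed point (Knaster–Tarski)
  set S : Set (Fin n → ℝ) :=
    {x | (∀ i, 0 ≤ x i) ∧ (∀ i, x i ≤ u i) ∧ ∀ i, f x i ≤ x i} with hSdef
  have huS : u ∈ S :=
    ⟨hu0, fun i => le_refl _, fun i => (hfle u hu0 i (u i) (hu0 i)).mpr (huB i)⟩
  have hSne : S.Nonempty := ⟨u, huS⟩
  set xs : Fin n → ℝ := fun i => sInf ((fun y => y i) '' S) with hxsdef
  have hbdd : ∀ i, BddBelow ((fun y : Fin n → ℝ => y i) '' S) := by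
    intro i
    refine ⟨0, ?_⟩
    rintro r ⟨z, hz, rfl⟩
    exact hz.1 i
  have himgne : ∀ i, ((fun y : Fin n → ℝ => y i) '' S).Nonempty :=
    fun i => ⟨u i, u, huS, rfl⟩
  have hxs_le : ∀ z ∈ S, ∀ i, xs i ≤ z i :=
    fun z hz i => csInf_le (hbdd i) ⟨z, hz, rfl⟩
  have hxs0 : ∀ i, 0 ≤ xs i := by
    intro i
    refine le_csInf (himgne i) ?_
    rintro r ⟨z, hz, rfl⟩
    exact hz.1 i
  have hxsu : ∀ i, xs i ≤ u i := hxs_le u huS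
  have hfxs : ∀ i, f xs i ≤ xs i := by
    intro i
    refine le_csInf (himgne i) ?_
    rintro r ⟨z, hz, rfl⟩
    exact le_trans (hfmono xs z hxs0 (fun i' => hxs_le z hz i') i) (hz.2.2 i)
  have hxsS : xs ∈ S := ⟨hxs0, hxsu, hfxs⟩
  have hfxsS : f xs ∈ S :=
    ⟨hf0 xs hxs0, fun i => le_trans (hfxs i) (hxsu i),
      fun i => hfmono (f xs) xs (hf0 xs hxs0) hfxs i⟩
  have hfix : ∀ i, f xs i = xs i :=
    fun i => le_antisymm (hfxs i) (hxs_le (f xs) hfxsS i)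
  -- the fixed-point equation
  have heqn : ∀ i, s * xs i ^ (m - 1) = tApply B xs i + b i := by
    intro i
    have ha : 0 ≤ (tApply B xs i + b i) / s := hinner xs hxs0 i
    have h1 : xs i ^ (m - 1) = (tApply B xs i + b i) / s := by
      rw [← hfix i, hfdef]
      dsimp only
      rw [← Real.rpow_natCast (((tApply B xs i + b i) / s) ^ (((m - 1 : ℕ)):ℝ)⁻¹) (m - 1),
        ← Real.rpow_mul ha, inv_mul_cancel₀ (by exact_mod_cast hk0 : (((m - 1 : ℕ)):ℝ) ≠ 0),
        Real.rpow_one]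
    rw [h1]
    field_simp
  have hAxs : ∀ i, tApply A xs i = b i := by
    intro i
    rw [tApply_sub hAB]
    linarith [heqn i]
  -- least element property
  have hleast : ∀ z : Fin n → ℝ, (∀ i, 0 ≤ z i) →
      (∀ i, tApply B z i + b i ≤ s * z i ^ (m - 1)) → ∀ i, xs i ≤ z i := by
    intro z hz0 hzB
    set w : Fin n → ℝ := fun i => min (z i) (u i) with hwdef
    have hw0 : ∀ i, 0 ≤ w i := fun i => le_min (hz0 i) (hu0 i)
    have hwz : ∀ i, w i ≤ z i := fun i => min_le_left _ _
    have hwu : ∀ i, w i ≤ u i := fun i => min_le_right _ _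
    have hfw : ∀ i, f w i ≤ w i := by
      intro i
      refine le_min ?_ ?_
      · exact le_trans (hfmono w z hw0 hwz i) ((hfle z hz0 i (z i) (hz0 i)).mpr (hzB i))
      · exact le_trans (hfmono w u hw0 hwu i) (huS.2.2 i)
    intro i
    exact le_trans (hxs_le w ⟨hw0, hwu, hfw⟩ i) (hwz i)
  -- assembling the statement
  refine ⟨xs, ⟨hxs0, fun i => by rw [hAxs i]; ring⟩, ?_, ⟨hxs0, fun i => (hAxs i).ge, ?_⟩, ?_⟩
  · intro y ⟨hy0, hyeq⟩
    have hyB : ∀ i, tApply B y i + b i ≤ s * y i ^ (m - 1) := by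
      intro i
      have h1 := tApply_sub hAB y i
      have h2 := hyeq i
      linarith
    have hxy : ∀ i, xs i ≤ y i := hleast y hy0 hyB
    refine ⟨Finset.sum_le_sum fun i _ => hxy i, fun hsum => ?_⟩
    funext i
    by_contra hne
    have hlt : xs i < y i := lt_of_le_of_ne (hxy i) (Ne.symm hne)
    have : (∑ i, xs i) < ∑ i, y i :=
      Finset.sum_lt_sum (fun j _ => hxy j) ⟨i, Finset.mem_univ i, hlt⟩
    linarith
  · refine Finset.sum_eq_zero fun i _ => ?_
    rw [hAxs i]
    ring
  · intro x ⟨hx0, hxge, _⟩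
    have hxB : ∀ i, tApply B x i + b i ≤ s * x i ^ (m - 1) := by
      intro i
      have h1 := tApply_sub hAB x i
      have h2 := hxge i
      linarith
    have hxy : ∀ i, xs i ≤ x i := hleast x hx0 hxB
    unfold l0
    apply Finset.card_le_card
    intro i hi
    simp only [Finset.mem_filter, Finset.mem_univ, true_and] at hi ⊢
    intro h0
    apply hi
    have := hxy i
    rw [h0] at this
    exact le_antisymm this (hxs0 i)
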